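/- Let ω ∈ ℂ with Re ω ≠ 0. If f : ℝ → ℂ is almost periodic, then G_ω[f] is almost periodic. -/

import Mathlib

open MeasureTheory Filter Topology
open scoped ENNReal NNReal

noncomputable section

/-- Bochner-almost periodic function `ℝ → ℂ`. -/
def AP (f : ℝ → ℂ) : Prop :=
  Continuous f ∧ ∀ b : ℕ → ℝ, ∃ φ : ℕ → ℕ, StrictMono φ ∧ ∃ g : ℝ → ℂ,
    TendstoUniformly (fun m t => f (t + b (φ m))) g atTop

/-- Bounded continuous. -/
def BCb (f : ℝ → ℂ) : Prop := Continuous f ∧ ∃ C : ℝ, ∀ t, ‖f t‖ ≤ C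

def BC0 (f : ℝ → ℂ) : Prop := BCb f ∧ Tendsto f atTop (nhds 0)

def C00 (f : ℝ → ℂ) : Prop := BC0 f ∧ Tendsto f atBot (nhds 0)

def Lp0 (p : ℝ) (f : ℝ → ℂ) : Prop :=
  (∃ C : ℝ, ∀ t ≤ (0:ℝ), ‖f t‖ ≤ C) ∧ (∫⁻ t in Set.Ioi (0:ℝ), (‖f t‖₊ : ℝ≥0∞) ^ p) < ⊤

def LpR (p : ℝ) (f : ℝ → ℂ) : Prop := (∫⁻ t : ℝ, (‖f t‖₊ : ℝ≥0∞) ^ p) < ⊤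

def AAP (f : ℝ → ℂ) : Prop :=
  BCb f ∧ ∃ φ g : ℝ → ℂ, (∀ t, f t = φ t + g t) ∧ AP φ ∧ Tendsto g atTop (nhds 0)

def AAP0 (f : ℝ → ℂ) : Prop :=
  BCb f ∧ ∃ φ g : ℝ → ℂ, (∀ t, f t = φ t + g t) ∧ AP φ ∧
    Tendsto g atTop (nhds 0) ∧ Tendsto g atBot (nhds 0)

def APp (p : ℝ) (f : ℝ → ℂ) : Prop :=
  BCb f ∧ ∃ φ g : ℝ → ℂ, (∀ t, f t = φ t + g t) ∧ AP φ ∧ Lp0 p g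

def APp0 (p : ℝ) (f : ℝ → ℂ) : Prop :=
  BCb f ∧ ∃ φ g : ℝ → ℂ, (∀ t, f t = φ t + g t) ∧ AP φ ∧ LpR p g

/-- The Green kernel `g_ω`. -/
def gker (ω : ℂ) (t s : ℝ) : ℂ :=
  if Real.sign ω.re * (t - s) < 0
  then ((-Real.sign ω.re : ℝ) : ℂ) * Complex.exp (ω * ((t - s : ℝ) : ℂ)) else 0

/-- The Green operator `G_ω`. -/
def Gop (ω : ℂ) (f : ℝ → ℂ) (t : ℝ) : ℂ := ∫ s : ℝ, gker ω t s * f s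

/-- The absolute Green operator `I_ω`, with values in `[0,∞]`. -/
def Iop (ω : ℂ) (f : ℝ → ℂ) (t : ℝ) : ℝ≥0∞ := ∫⁻ s : ℝ, (‖gker ω t s * f s‖₊ : ℝ≥0∞)

def Gam {m : ℕ} (γ : Fin m → ℂ) (j : Fin m) : ℂ := ∏ k ∈ Finset.univ.erase j, (γ j - γ k)

/-- The Green operator for the family γ. -/
def GreenOp {m : ℕ} (γ : Fin m → ℂ) (f : ℝ → ℂ) (t : ℝ) : ℂ :=
  ∑ j, (Gam γ j)⁻¹ * Gop (γ j) f t

def Dpoly {m : ℕ} (γ : Fin m → ℂ) : Polynomial ℂ := ∏ j, (Polynomial.X - Polynomial.C (γ j))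

/-- The differential operator with characteristic polynomial `∏ (x - γ j)`. -/
def Dop {m : ℕ} (γ : Fin m → ℂ) (z : ℝ → ℂ) (t : ℝ) : ℂ :=
  ∑ k ∈ Finset.range (m + 1), (Dpoly γ).coeff k * iteratedDeriv k z t

def APm (m : ℕ) (F : ℝ → (Fin m → ℂ) → ℂ) : Prop :=
  Continuous (fun p : ℝ × (Fin m → ℂ) => F p.1 p.2) ∧
  ∀ b : ℕ → ℝ, ∃ φ : ℕ → ℕ, StrictMono φ ∧ ∃ G : ℝ → (Fin m → ℂ) → ℂ,
    ∀ K : Set (Fin m → ℂ), IsCompact K →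
      TendstoUniformlyOn (fun k (p : ℝ × (Fin m → ℂ)) => F (p.1 + b (φ k)) p.2)
        (fun p => G p.1 p.2) atTop (Set.univ ×ˢ K)

def DecayTop (m : ℕ) (h : ℝ → (Fin m → ℂ) → ℂ) : Prop :=
  ∀ K : Set (Fin m → ℂ), IsCompact K →
    TendstoUniformlyOn (fun t x => h t x) 0 atTop K

def DecayBot (m : ℕ) (h : ℝ → (Fin m → ℂ) → ℂ) : Prop :=
  ∀ K : Set (Fin m → ℂ), IsCompact K →
    TendstoUniformlyOn (fun t x => h t x) 0 atBot K

def AAPm (m : ℕ) (F : ℝ → (Fin m → ℂ) → ℂ) : Prop :=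
  Continuous (fun p : ℝ × (Fin m → ℂ) => F p.1 p.2) ∧ (∃ C : ℝ, ∀ t x, ‖F t x‖ ≤ C) ∧
  ∃ Φ h : ℝ → (Fin m → ℂ) → ℂ, (∀ t x, F t x = Φ t x + h t x) ∧ APm m Φ ∧ DecayTop m h

def AAP0m (m : ℕ) (F : ℝ → (Fin m → ℂ) → ℂ) : Prop :=
  Continuous (fun p : ℝ × (Fin m → ℂ) => F p.1 p.2) ∧ (∃ C : ℝ, ∀ t x, ‖F t x‖ ≤ C) ∧
  ∃ Φ h : ℝ → (Fin m → ℂ) → ℂ, (∀ t x, F t x = Φ t x + h t x) ∧ APm m Φ ∧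
    DecayTop m h ∧ DecayBot m h

/-- Complete Bell polynomials. -/
def Bell : ℕ → (ℕ → ℂ) → ℂ
  | 0, _ => 1
  | (i+1), x => ∑ j ∈ Finset.range (i+1), (Nat.choose i j : ℂ) * Bell (i - j) x * x (j+1)
decreasing_by exact Nat.lt_succ_of_le (Nat.sub_le i j)

/-- `f_i(x_1,…,x_i) = B_{i+1}(x_1,…,x_i,0)`. -/
def fBell (i : ℕ) (x : ℕ → ℂ) : ℂ := Bell (i+1) (fun k => if k = i+1 then 0 else x k)

def Pa (n : ℕ) (a : ℕ → ℂ) : Polynomial ℂ :=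
  Polynomial.X ^ n + ∑ i ∈ Finset.range n, Polynomial.C (a i) * Polynomial.X ^ i

def Prl (n : ℕ) (r : ℕ → ℝ → ℂ) (lam : ℂ) (t : ℝ) : ℂ :=
  ∑ k ∈ Finset.range n, lam ^ k * r k t

/-- `(d^k/dλ^k) P(r(t);λ)`. -/
def PrlD (n k : ℕ) (r : ℕ → ℝ → ℂ) (lam : ℂ) (t : ℝ) : ℂ :=
  (Nat.factorial k : ℂ) * ∑ i ∈ Finset.range n, (Nat.choose i k : ℂ) * lam ^ (i - k) * r i t

def DopP (n : ℕ) (a : ℕ → ℂ) (lam : ℂ) (z : ℝ → ℂ) (t : ℝ) : ℂ :=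
  ∑ j ∈ Finset.Icc 1 n, ((Nat.factorial j : ℂ))⁻¹ *
    Polynomial.eval lam (Polynomial.derivative^[j] (Pa n a)) * iteratedDeriv (j-1) z t

def Lterm (n : ℕ) (r : ℕ → ℝ → ℂ) (lam : ℂ) (z : ℝ → ℂ) (t : ℝ) : ℂ :=
  ∑ k ∈ Finset.Icc 1 (n-1), ((Nat.factorial k : ℂ))⁻¹ * PrlD n k r lam t * iteratedDeriv (k-1) z t

def Fterm (n : ℕ) (a : ℕ → ℂ) (r : ℕ → ℝ → ℂ) (lam : ℂ) (z : ℝ → ℂ) (t : ℝ) : ℂ :=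
  ∑ i ∈ Finset.Icc 2 n, ∑ j ∈ Finset.range (n - i + 1),
    (Nat.choose (i+j) j : ℂ) * (a (i+j) + r (i+j) t) * lam ^ j *
      fBell (i-1) (fun k => iteratedDeriv (k-1) z t)

def aT (n : ℕ) {m : ℕ} (γ : Fin m → ℂ) (j : Fin m) : ℝ :=
  ∑ i ∈ Finset.range (n-1), ‖γ j‖ ^ i

def Lconst (n : ℕ) (γ : Fin (n-1) → ℂ) (r : ℕ → ℝ → ℂ) (lam : ℂ) (β : ℝ) : ℝ≥0∞ :=
  ∑ j, ∑ k ∈ Finset.Icc 1 (n-1),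
    ENNReal.ofReal (aT n γ j / (‖Gam γ j‖ * (Nat.factorial k))) *
      ⨆ t : ℝ, Iop (((γ j).re - Real.sign (γ j).re * β : ℝ) : ℂ) (PrlD n k r lam) t

def Qconst (n : ℕ) (γ : Fin (n-1) → ℂ) (a : ℕ → ℂ) (r : ℕ → ℝ → ℂ) (lam : ℂ) (β : ℝ) : ℝ≥0∞ :=
  ∑ j, ∑ i ∈ Finset.Icc 2 n, ∑ k ∈ Finset.range (i-1),
    ENNReal.ofReal (aT n γ j / ‖Gam γ j‖ * (Nat.choose i k) * ‖lam‖ ^ k) *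
      (ENNReal.ofReal (‖a i‖ / |(γ j).re - Real.sign (γ j).re * β|) +
        ⨆ t : ℝ, Iop (((γ j).re - Real.sign (γ j).re * β : ℝ) : ℂ) (r i) t)

def mConst (n : ℕ) (δ : ℝ) : ℝ :=
  sSup { q : ℝ | ∃ i ∈ Finset.Icc 1 (n-1), ∃ X Y : ℕ → ℂ,
    (∑ k ∈ Finset.Icc 1 i, ‖X k‖) ≤ δ ∧
    (∑ k ∈ Finset.Icc 1 i, ‖Y k‖) ≤ δ ∧
    (∑ k ∈ Finset.Icc 1 i, ‖X k - Y k‖) ≠ 0 ∧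
    q = ‖fBell i X - fBell i Y‖ / ∑ k ∈ Finset.Icc 1 i, ‖X k - Y k‖ }


/-! ### Auxiliary lemmas for Statement 3 -/

lemma integrable_exp_abs_aux {a : ℝ} (ha : 0 < a) :
    Integrable fun u : ℝ => Real.exp (-a * |u|) := by
  have hIoi : IntegrableOn (fun u : ℝ => Real.exp (-a * |u|)) (Set.Ioi 0) := by
    refine (exp_neg_integrableOn_Ioi 0 ha).congr_fun (fun x hx => ?_) measurableSet_Ioi
    rw [abs_of_pos hx]
  have hIic : IntegrableOn (fun u : ℝ => Real.exp (-a * |u|)) (Set.Iic 0) := by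
    rw [IntegrableOn, ← Measure.map_neg_eq_self (volume : Measure ℝ)]
    have m : MeasurableEmbedding fun x : ℝ => -x :=
      (Homeomorph.neg ℝ).measurableEmbedding
    rw [Measure.restrict_map m.measurable (measurableSet_Iic), m.integrable_map_iff]
    simp_rw [Function.comp_def, abs_neg, Set.neg_preimage, Set.neg_Iic, neg_zero]
    exact (integrableOn_Ici_iff_integrableOn_Ioi).mpr hIoi
  have := hIic.union hIoi
  rwa [Set.Iic_union_Ioi, integrableOn_univ] at this

lemma gker_norm_le (ω : ℂ) (hω : ω.re ≠ 0) (t s : ℝ) :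
    ‖gker ω t s‖ ≤ Real.exp (-|ω.re| * |t - s|) := by
  unfold gker
  split_ifs with h
  · rw [norm_mul]
    have h2 : ‖Complex.exp (ω * ((t - s : ℝ) : ℂ))‖ = Real.exp (ω.re * (t - s)) := by
      rw [Complex.norm_exp]
      norm_num
    rw [h2]
    rcases lt_or_gt_of_ne hω with hneg | hpos
    · rw [Real.sign_of_neg hneg] at h ⊢
      have hts : 0 < t - s := by nlinarith
      have h3 : ‖((-(-1 : ℝ) : ℝ) : ℂ)‖ = 1 := by norm_num
      rw [h3, one_mul, abs_of_neg hneg, abs_of_pos hts]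
      apply le_of_eq
      congr 1
      ring
    · rw [Real.sign_of_pos hpos] at h ⊢
      have hts : t - s < 0 := by nlinarith
      have h3 : ‖((-(1 : ℝ) : ℝ) : ℂ)‖ = 1 := by norm_num
      rw [h3, one_mul, abs_of_pos hpos, abs_of_neg hts]
      apply le_of_eq
      congr 1
      ring
  · simpa using (Real.exp_pos (-|ω.re| * |t - s|)).le

lemma gker_meas (ω : ℂ) (t : ℝ) : Measurable fun s => gker ω t s := by
  unfold gker
  refine Measurable.ite ?_ ?_ measurable_const
  · exact measurableSet_lt (measurable_const.mul (measurable_const.sub measurable_id))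
      measurable_const
  · have : Continuous fun s : ℝ => ((-Real.sign ω.re : ℝ) : ℂ) *
        Complex.exp (ω * ((t - s : ℝ) : ℂ)) := by
      continuity
    exact this.measurable

lemma gker_shift (ω : ℂ) (t s b : ℝ) : gker ω (t + b) (s + b) = gker ω t s := by
  unfold gker
  simp only [add_sub_add_right_eq_sub]

lemma integrable_gker_mul (ω : ℂ) (hω : ω.re ≠ 0) (t : ℝ) {f : ℝ → ℂ} {C : ℝ}
    (hm : AEStronglyMeasurable f volume) (hC : ∀ s, ‖f s‖ ≤ C) :
    Integrable fun s => gker ω t s * f s := by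
  have ha : 0 < |ω.re| := abs_pos.mpr hω
  refine Integrable.mono' (((integrable_exp_abs_aux ha).comp_sub_left t).const_mul C)
    ((gker_meas ω t).aestronglyMeasurable.mul hm) (Eventually.of_forall fun s => ?_)
  rw [norm_mul]
  calc ‖gker ω t s‖ * ‖f s‖ ≤ Real.exp (-|ω.re| * |t - s|) * C :=
        mul_le_mul (gker_norm_le ω hω t s) (hC s) (norm_nonneg _) (Real.exp_pos _).le
    _ = C * Real.exp (-|ω.re| * |t - s|) := mul_comm _ _

lemma Gop_dist_le (ω : ℂ) (hω : ω.re ≠ 0) {u v : ℝ → ℂ} {Cu Cv ε : ℝ}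
    (hu : AEStronglyMeasurable u volume) (hv : AEStronglyMeasurable v volume)
    (hCu : ∀ s, ‖u s‖ ≤ Cu) (hCv : ∀ s, ‖v s‖ ≤ Cv)
    (hd : ∀ s, ‖u s - v s‖ ≤ ε) (t : ℝ) :
    ‖Gop ω u t - Gop ω v t‖ ≤ (∫ x : ℝ, Real.exp (-|ω.re| * |x|)) * ε := by
  have ha : 0 < |ω.re| := abs_pos.mpr hω
  have hiu := integrable_gker_mul ω hω t hu hCu
  have hiv := integrable_gker_mul ω hω t hv hCv
  have heq : Gop ω u t - Gop ω v t = ∫ s : ℝ, gker ω t s * (u s - v s) := by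
    rw [Gop, Gop, ← integral_sub hiu hiv]
    congr 1
    funext s
    ring
  rw [heq]
  have hbound : ‖∫ s : ℝ, gker ω t s * (u s - v s)‖ ≤
      ∫ s : ℝ, Real.exp (-|ω.re| * |t - s|) * ε := by
    refine norm_integral_le_of_norm_le (((integrable_exp_abs_aux ha).comp_sub_left t).mul_const ε)
      (Eventually.of_forall fun s => ?_)
    rw [norm_mul]
    exact mul_le_mul (gker_norm_le ω hω t s) (hd s) (norm_nonneg _) (Real.exp_pos _).le
  refine hbound.trans (le_of_eq ?_)
  rw [integral_mul_const]
  congr 1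
  exact integral_sub_left_eq_self (fun x : ℝ => Real.exp (-|ω.re| * |x|)) volume t

lemma Gop_shift (ω : ℂ) (f : ℝ → ℂ) (t b : ℝ) :
    Gop ω f (t + b) = Gop ω (fun s => f (s + b)) t := by
  unfold Gop
  rw [← integral_add_right_eq_self (fun s : ℝ => gker ω (t + b) s * f s) b]
  congr 1
  funext s
  rw [gker_shift]

lemma gker_continuousAt (ω : ℂ) (hω : ω.re ≠ 0) {s t₀ : ℝ} (hs : s ≠ t₀) :
    ContinuousAt (fun t => gker ω t s) t₀ := by
  have hsign : Real.sign ω.re ≠ 0 := by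
    rcases lt_or_gt_of_ne hω with h | h
    · rw [Real.sign_of_neg h]; norm_num
    · rw [Real.sign_of_pos h]; norm_num
  have hne : Real.sign ω.re * (t₀ - s) ≠ 0 :=
    mul_ne_zero hsign (sub_ne_zero.mpr hs.symm)
  have hcont : Continuous fun t : ℝ => Real.sign ω.re * (t - s) := by continuity
  rcases lt_or_gt_of_ne hne with h | h
  · have hmem : {t : ℝ | Real.sign ω.re * (t - s) < 0} ∈ 𝓝 t₀ :=
      (isOpen_lt hcont continuous_const).mem_nhds h
    have hc : ContinuousAt (fun t : ℝ => ((-Real.sign ω.re : ℝ) : ℂ) *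
        Complex.exp (ω * ((t - s : ℝ) : ℂ))) t₀ := by
      apply Continuous.continuousAt
      continuity
    refine hc.congr ?_
    filter_upwards [hmem] with t ht
    simp only [gker, if_pos ht]
  · have hmem : {t : ℝ | 0 < Real.sign ω.re * (t - s)} ∈ 𝓝 t₀ :=
      (isOpen_lt continuous_const hcont).mem_nhds h
    refine (continuousAt_const : ContinuousAt (fun _ : ℝ => (0 : ℂ)) t₀).congr ?_
    filter_upwards [hmem] with t ht
    simp only [gker, if_neg (asymm ht)]

lemma Gop_continuous (ω : ℂ) (hω : ω.re ≠ 0) {f : ℝ → ℂ} {C : ℝ} (hfc : Continuous f)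
    (hC : ∀ s, ‖f s‖ ≤ C) : Continuous (Gop ω f) := by
  have ha : 0 < |ω.re| := abs_pos.mpr hω
  have hC0 : 0 ≤ C := (norm_nonneg _).trans (hC 0)
  rw [continuous_iff_continuousAt]
  intro t₀
  refine continuousAt_of_dominated (F := fun t s => gker ω t s * f s)
    (bound := fun s => C * Real.exp |ω.re| * Real.exp (-|ω.re| * |t₀ - s|)) ?_ ?_ ?_ ?_
  · exact Eventually.of_forall fun t =>
      (gker_meas ω t).aestronglyMeasurable.mul hfc.aestronglyMeasurable
  · filter_upwards [Metric.closedBall_mem_nhds t₀ one_pos] with t ht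
    refine Eventually.of_forall fun s => ?_
    have h1 : ‖gker ω t s * f s‖ ≤ Real.exp (-|ω.re| * |t - s|) * C := by
      rw [norm_mul]
      exact mul_le_mul (gker_norm_le ω hω t s) (hC s) (norm_nonneg _) (Real.exp_pos _).le
    have htt : |t - t₀| ≤ 1 := by
      have := Metric.mem_closedBall.mp ht
      rwa [Real.dist_eq] at this
    have h2 : Real.exp (-|ω.re| * |t - s|) ≤ Real.exp |ω.re| * Real.exp (-|ω.re| * |t₀ - s|) := by
      rw [← Real.exp_add]
      apply Real.exp_le_exp.mpr
      have h3 : |t₀ - s| ≤ |t₀ - t| + |t - s| := abs_sub_le _ _ _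
      have h4 : |t₀ - t| ≤ 1 := by rwa [abs_sub_comm]
      nlinarith [abs_nonneg (t - s), abs_nonneg (t₀ - s)]
    calc ‖gker ω t s * f s‖ ≤ Real.exp (-|ω.re| * |t - s|) * C := h1
      _ ≤ (Real.exp |ω.re| * Real.exp (-|ω.re| * |t₀ - s|)) * C := by
          exact mul_le_mul_of_nonneg_right h2 hC0
      _ = C * Real.exp |ω.re| * Real.exp (-|ω.re| * |t₀ - s|) := by ring
  · exact ((integrable_exp_abs_aux ha).comp_sub_left t₀).const_mul _
  · have hae : ∀ᵐ s : ℝ, s ≠ t₀ := by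
      rw [ae_iff]
      simp [measure_singleton (α := ℝ) t₀]
    filter_upwards [hae] with s hs
    exact (gker_continuousAt ω hω hs).mul continuousAt_const

lemma AP_bounded {f : ℝ → ℂ} (hf : AP f) : ∃ C : ℝ, ∀ t, ‖f t‖ ≤ C := by
  by_contra hcon
  push_neg at hcon
  choose b hb using fun k : ℕ => hcon k
  obtain ⟨φ, hφ, g, hg⟩ := hf.2 b
  have h1 : Tendsto (fun m => ‖f (0 + b (φ m))‖) atTop (𝓝 ‖g 0‖) :=
    (hg.tendsto_at 0).norm
  have h2 : Tendsto (fun m => ‖f (0 + b (φ m))‖) atTop atTop := by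
    apply tendsto_atTop_mono (fun m => ?_) tendsto_natCast_atTop_atTop
    simp only [zero_add]
    exact le_trans (Nat.cast_le.mpr (hφ.id_le m)) (hb (φ m)).le
  exact not_tendsto_atTop_of_tendsto_nhds h1 h2

/-- `G_ω` preserves almost periodicity. -/
theorem stmt3 (ω : ℂ) (hω : ω.re ≠ 0) (f : ℝ → ℂ) (hf : AP f) : AP (Gop ω f) := by
  obtain ⟨hfc, hap⟩ := hf
  obtain ⟨C, hC⟩ := AP_bounded ⟨hfc, hap⟩
  have hC0 : 0 ≤ C := (norm_nonneg _).trans (hC 0)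
  have ha : 0 < |ω.re| := abs_pos.mpr hω
  set I0 : ℝ := ∫ x : ℝ, Real.exp (-|ω.re| * |x|) with hI0def
  have hI0 : 0 ≤ I0 := integral_nonneg fun u => (Real.exp_pos _).le
  refine ⟨Gop_continuous ω hω hfc hC, fun b => ?_⟩
  obtain ⟨φ, hφ, g, hg⟩ := hap b
  have hgc : Continuous g :=
    hg.continuous (Eventually.of_forall fun m =>
      hfc.comp (continuous_id.add continuous_const)).frequently
  have hgC : ∀ s, ‖g s‖ ≤ C + 1 := by
    obtain ⟨m, hm⟩ := (Metric.tendstoUniformly_iff.mp hg 1 one_pos).exists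
    intro s
    calc ‖g s‖ ≤ ‖g s - f (s + b (φ m))‖ + ‖f (s + b (φ m))‖ := by
          have := norm_add_le (g s - f (s + b (φ m))) (f (s + b (φ m)))
          simpa using this
      _ ≤ 1 + C := by
          have := hm s
          rw [dist_eq_norm] at this
          have h2 := hC (s + b (φ m))
          linarith
      _ = C + 1 := by ring
  refine ⟨φ, hφ, Gop ω g, ?_⟩
  rw [Metric.tendstoUniformly_iff]
  intro ε hε
  have hε' : 0 < ε / (2 * (I0 + 1)) := by positivity
  filter_upwards [Metric.tendstoUniformly_iff.mp hg _ hε'] with m hm t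
  rw [Gop_shift, dist_eq_norm]
  have key : ‖Gop ω g t - Gop ω (fun s => f (s + b (φ m))) t‖ ≤ I0 * (ε / (2 * (I0 + 1))) := by
    refine Gop_dist_le ω hω hgc.aestronglyMeasurable
      ((hfc.comp (continuous_id.add continuous_const)).aestronglyMeasurable)
      hgC (fun s => hC (s + b (φ m))) (fun s => ?_) t
    have := hm s
    rw [dist_eq_norm] at this
    exact this.le
  have hlt : I0 * (ε / (2 * (I0 + 1))) < ε := by
    rw [div_eq_mul_inv]
    have h1 : I0 * (ε * (2 * (I0 + 1))⁻¹) = ε * (I0 / (2 * (I0 + 1))) := by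
      field_simp
    rw [h1]
    have h2 : I0 / (2 * (I0 + 1)) < 1 := by
      rw [div_lt_one (by positivity)]
      linarith
    nlinarith
  exact lt_of_le_of_lt key hlt

end
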